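/- If S is a semibrick in an exact category E, then every morphism φ : X → Y with X, Y ∈ Filt(S) factors as φ = ι ∘ π where π is a deflation in E, ι is an inflation in E, and the intermediate object lies in Filt(S). -/

import Mathlib

open CategoryTheory CategoryTheory.Limits

universe v u

/-- A Quillen exact structure on an additive category `E`: a class of
kernel-cokernel pairs ("conflations"), closed under isomorphisms, containing
the trivial conflations, with inflations and deflations closed under
composition, pushouts of inflations and pullbacks of deflations existing and
again inflations/deflations. -/
structure ExactStruct (E : Type u) [Category.{v} E] [HasZeroMorphisms E] where
  conf : ∀ ⦃X Y Z : E⦄, (X ⟶ Y) → (Y ⟶ Z) → Prop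
  conf_comp : ∀ ⦃X Y Z : E⦄ {f : X ⟶ Y} {g : Y ⟶ Z}, conf f g → f ≫ g = 0
  conf_isKernel : ∀ ⦃X Y Z : E⦄ {f : X ⟶ Y} {g : Y ⟶ Z} (h : conf f g),
    Nonempty (IsLimit (KernelFork.ofι f (conf_comp h)))
  conf_isCokernel : ∀ ⦃X Y Z : E⦄ {f : X ⟶ Y} {g : Y ⟶ Z} (h : conf f g),
    Nonempty (IsColimit (CokernelCofork.ofπ g (conf_comp h)))
  conf_iso : ∀ ⦃X Y Z X' Y' Z' : E⦄ {f : X ⟶ Y} {g : Y ⟶ Z} {f' : X' ⟶ Y'} {g' : Y' ⟶ Z'}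
    (α : X ≅ X') (β : Y ≅ Y') (γ : Z ≅ Z'),
    conf f g → f ≫ β.hom = α.hom ≫ f' → g ≫ γ.hom = β.hom ≫ g' → conf f' g'
  conf_id_left : ∀ (X Z : E), IsZero Z → conf (𝟙 X) (0 : X ⟶ Z)
  conf_id_right : ∀ (Z X : E), IsZero Z → conf (0 : Z ⟶ X) (𝟙 X)
  infl_comp : ∀ ⦃X Y W : E⦄ {f : X ⟶ Y} {f' : Y ⟶ W},
    (∃ (Z : E) (g : Y ⟶ Z), conf f g) → (∃ (Z : E) (g : W ⟶ Z), conf f' g) →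
    ∃ (Z : E) (g : W ⟶ Z), conf (f ≫ f') g
  defl_comp : ∀ ⦃X Y W : E⦄ {g : X ⟶ Y} {g' : Y ⟶ W},
    (∃ (Z : E) (f : Z ⟶ X), conf f g) → (∃ (Z : E) (f : Z ⟶ Y), conf f g') →
    ∃ (Z : E) (f : Z ⟶ X), conf f (g ≫ g')
  infl_pushout : ∀ ⦃X Y X' : E⦄ (f : X ⟶ Y) (t : X ⟶ X'),
    (∃ (Z : E) (g : Y ⟶ Z), conf f g) →
    ∃ (P : E) (inl : Y ⟶ P) (inr : X' ⟶ P),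
      IsPushout f t inl inr ∧ ∃ (Z : E) (g : P ⟶ Z), conf inr g
  defl_pullback : ∀ ⦃Y Z T : E⦄ (d : Y ⟶ Z) (t : T ⟶ Z),
    (∃ (X : E) (f : X ⟶ Y), conf f d) →
    ∃ (P : E) (p1 : P ⟶ Y) (p2 : P ⟶ T),
      IsPullback p1 p2 d t ∧ ∃ (X : E) (f : X ⟶ P), conf f p2

namespace ExactStruct

variable {E : Type u} [Category.{v} E] [HasZeroMorphisms E]

/-- `f` is an inflation (admissible monic): the first map of some conflation. -/
def Inflation (S : ExactStruct E) {X Y : E} (f : X ⟶ Y) : Prop :=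
  ∃ (Z : E) (g : Y ⟶ Z), S.conf f g

/-- `g` is a deflation (admissible epic): the second map of some conflation. -/
def Deflation (S : ExactStruct E) {Y Z : E} (g : Y ⟶ Z) : Prop :=
  ∃ (X : E) (f : X ⟶ Y), S.conf f g

end ExactStruct

/-- `FiltLenP conf C n X` : `X` admits a `C`-filtration of length `n` w.r.t. the
conflation class `conf`, i.e. a chain of inflations `0 = X₀ ↣ ⋯ ↣ Xₙ = X` whose
successive cokernels lie in `C`. -/
inductive FiltLenP {E : Type u} [Category.{v} E]
    (conf : ∀ ⦃X Y Z : E⦄, (X ⟶ Y) → (Y ⟶ Z) → Prop) (C : Set E) : ℕ → E → Prop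
  | zero (X : E) : IsZero X → FiltLenP conf C 0 X
  | step {X Y c : E} (n : ℕ) (f : X ⟶ Y) (g : Y ⟶ c) :
      FiltLenP conf C n X → c ∈ C → conf f g → FiltLenP conf C (n + 1) Y

namespace ExactStruct

variable {E : Type u} [Category.{v} E] [HasZeroMorphisms E]

/-- `Filt C` : the objects admitting a finite `C`-filtration. -/
def Filt (S : ExactStruct E) (C : Set E) : Set E :=
  {X | ∃ n, FiltLenP S.conf C n X}

/-- The conflations of the exact structure induced on the subcategory `W`. -/
def confIn (S : ExactStruct E) (W : Set E) :
    ∀ ⦃X Y Z : E⦄, (X ⟶ Y) → (Y ⟶ Z) → Prop :=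
  fun X Y Z f g => S.conf f g ∧ X ∈ W ∧ Y ∈ W ∧ Z ∈ W

/-- A simple object of the exact category `E`. -/
def Simple (S : ExactStruct E) (M : E) : Prop :=
  ¬ IsZero M ∧ ∀ ⦃L N : E⦄ (f : L ⟶ M) (g : M ⟶ N), S.conf f g → IsZero L ∨ IsZero N

/-- A simple object of the extension-closed subcategory `W` with its induced
exact structure. -/
def SimpleIn (S : ExactStruct E) (W : Set E) (M : E) : Prop :=
  M ∈ W ∧ ¬ IsZero M ∧
    ∀ ⦃L N : E⦄ (f : L ⟶ M) (g : M ⟶ N), S.confIn W f g → IsZero L ∨ IsZero N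

/-- `E` is a length exact category: every object has a finite filtration with
simple subquotients. -/
def IsLength (S : ExactStruct E) : Prop :=
  ∀ X : E, ∃ n, FiltLenP S.conf {M | S.Simple M} n X

/-- The subcategory `W` (with its induced exact structure) is length. -/
def IsLengthIn (S : ExactStruct E) (W : Set E) : Prop :=
  ∀ X ∈ W, ∃ n, FiltLenP (S.confIn W) {M | S.SimpleIn W M} n X

/-- The inclusion of the full subcategory `W` into `E` is exact: every short
exact sequence in (the abelian category) `W` is a conflation of `E`. -/
def InclusionExact (S : ExactStruct E) (W : Set E)
    [Abelian (ObjectProperty.FullSubcategory fun X => X ∈ W)] : Prop :=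
  ∀ (A B C : ObjectProperty.FullSubcategory fun X => X ∈ W) (f : A ⟶ B) (g : B ⟶ C)
    (w : f ≫ g = 0), (ShortComplex.mk f g w).ShortExact → S.conf f.hom g.hom

/-- `W` is a wide subcategory of `E`: closed under extensions, abelian, and the
inclusion is exact. -/
def IsWide (S : ExactStruct E) (W : Set E) : Prop :=
  (∀ ⦃X Y Z : E⦄ (f : X ⟶ Y) (g : Y ⟶ Z), S.conf f g → X ∈ W → Z ∈ W → Y ∈ W) ∧
  ∃ inst : Abelian (ObjectProperty.FullSubcategory fun X => X ∈ W),
    @InclusionExact E _ _ S W inst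

end ExactStruct

/-- A brick: a nonzero object all of whose nonzero endomorphisms are
isomorphisms (i.e. the endomorphism ring is a division ring). -/
def Brick {E : Type u} [Category.{v} E] [HasZeroMorphisms E] (X : E) : Prop :=
  𝟙 X ≠ 0 ∧ ∀ f : X ⟶ X, f ≠ 0 → IsIso f

/-- A semibrick: a set of bricks which are pairwise Hom-orthogonal
(no nonzero morphisms between non-isomorphic members). -/
def Semibrick {E : Type u} [Category.{v} E] [HasZeroMorphisms E] (𝒮 : Set E) : Prop :=
  (∀ X ∈ 𝒮, Brick X) ∧
  ∀ X ∈ 𝒮, ∀ Y ∈ 𝒮, IsEmpty (X ≅ Y) → ∀ f : X ⟶ Y, f = 0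

/-- A class of objects closed under isomorphisms. -/
def IsoClosed {E : Type u} [Category.{v} E] (C : Set E) : Prop :=
  ∀ X Y : E, Nonempty (X ≅ Y) → X ∈ C → Y ∈ C

/-- Composite of a chain of morphisms `obj i ⟶ obj (i+1)`. -/
def comps {E : Type u} [Category.{v} E] (obj : ℕ → E)
    (ι : ∀ i, obj i ⟶ obj (i + 1)) (i : ℕ) : ∀ j, obj i ⟶ obj (i + j)
  | 0 => 𝟙 _
  | j + 1 => comps obj ι i j ≫ ι (i + j)


/-! ### Auxiliary lemmas -/

section Aux
set_option linter.unusedSectionVars false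

namespace ExactStruct

variable {E : Type u} [Category.{v} E] [Preadditive E]
  [HasZeroObject E] [HasBinaryBiproducts E] (S : ExactStruct E)

lemma mono_of_conf {X Y Z : E} {f : X ⟶ Y} {g : Y ⟶ Z} (h : S.conf f g) : Mono f := by
  obtain ⟨hk⟩ := S.conf_isKernel h
  exact ⟨fun {T} a b hab => Fork.IsLimit.hom_ext hk (by simpa using hab)⟩

lemma epi_of_conf {X Y Z : E} {f : X ⟶ Y} {g : Y ⟶ Z} (h : S.conf f g) : Epi g := by
  obtain ⟨hk⟩ := S.conf_isCokernel h
  exact ⟨fun {T} a b hab => Cofork.IsColimit.hom_ext hk (by simpa using hab)⟩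

/-- Factorization through the kernel part of a conflation. -/
lemma ker_fac {X Y Z : E} {f : X ⟶ Y} {g : Y ⟶ Z} (h : S.conf f g) {T : E}
    (t : T ⟶ Y) (ht : t ≫ g = 0) : ∃ l : T ⟶ X, l ≫ f = t := by
  obtain ⟨hk⟩ := S.conf_isKernel h
  obtain ⟨l, hl⟩ := KernelFork.IsLimit.lift' hk t ht
  exact ⟨l, by simpa using hl⟩

/-- Factorization through the cokernel part of a conflation. -/
lemma coker_fac {X Y Z : E} {f : X ⟶ Y} {g : Y ⟶ Z} (h : S.conf f g) {T : E}
    (t : Y ⟶ T) (ht : f ≫ t = 0) : ∃ l : Z ⟶ T, g ≫ l = t := by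
  obtain ⟨hk⟩ := S.conf_isCokernel h
  obtain ⟨l, hl⟩ := CokernelCofork.IsColimit.desc' hk t ht
  exact ⟨l, by simpa using hl⟩

lemma conf_iso_right {X Y Z Z' : E} {f : X ⟶ Y} {g : Y ⟶ Z} (h : S.conf f g)
    (γ : Z ≅ Z') : S.conf f (g ≫ γ.hom) :=
  S.conf_iso (Iso.refl X) (Iso.refl Y) γ h (by simp) (by simp)

/-- A morphism with the universal property of the kernel of `g` is the first map
of a conflation ending with `g`, provided `g` is a deflation. -/
lemma conf_of_kernel {A A' B C : E} {f : A ⟶ B} {g : B ⟶ C} (h : S.conf f g)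
    {f' : A' ⟶ B} (hf'g : f' ≫ g = 0) (hmono : Mono f')
    (up : ∀ (T : E) (t : T ⟶ B), t ≫ g = 0 → ∃ v : T ⟶ A', v ≫ f' = t) :
    S.conf f' g := by
  haveI := S.mono_of_conf h
  obtain ⟨v, hv⟩ := up A f (S.conf_comp h)
  obtain ⟨w, hw⟩ := S.ker_fac h f' hf'g
  have hvw : v ≫ w = 𝟙 A := by
    rw [← cancel_mono f, Category.assoc, hw, hv, Category.id_comp]
  have hwv : w ≫ v = 𝟙 A' := by
    haveI := hmono
    rw [← cancel_mono f', Category.assoc, hv, hw, Category.id_comp]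
  exact S.conf_iso (Iso.mk v w hvw hwv) (Iso.refl B) (Iso.refl C) h
    (by simpa using hv.symm) (by simp)

/-- Dual of `conf_of_kernel`. -/
lemma conf_of_cokernel {A B C C' : E} {f : A ⟶ B} {g : B ⟶ C} (h : S.conf f g)
    {q' : B ⟶ C'} (hfq : f ≫ q' = 0) (hepi : Epi q')
    (up : ∀ (T : E) (t : B ⟶ T), f ≫ t = 0 → ∃ v : C' ⟶ T, q' ≫ v = t) :
    S.conf f q' := by
  haveI := S.epi_of_conf h
  obtain ⟨v, hv⟩ := up C' q' hfq
  obtain ⟨w, hw⟩ := S.coker_fac h q' hfq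
  obtain ⟨v', hv'⟩ := up C g (S.conf_comp h)
  have hwv : w ≫ v' = 𝟙 C := by
    rw [← cancel_epi g, ← Category.assoc, hw, hv', Category.comp_id]
  have hv'w : v' ≫ w = 𝟙 C' := by
    haveI := hepi
    rw [← cancel_epi q', ← Category.assoc, hv', hw, Category.comp_id]
  exact S.conf_iso (Iso.refl A) (Iso.refl B) (Iso.mk w v' hwv hv'w) h (by simp)
    (by simpa using hw)

/-- The split conflation `X ⊞ Y`. -/
lemma conf_inr_fst (X Y : E) :
    S.conf (biprod.inr : Y ⟶ X ⊞ Y) (biprod.fst : X ⊞ Y ⟶ X) := by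
  obtain ⟨Z, hZ⟩ := HasZeroObject.zero (C := E)
  obtain ⟨P, inlP, inrP, hpo, W2, g₂, hg₂⟩ :=
    S.infl_pushout (0 : Z ⟶ X) (0 : Z ⟶ Y) ⟨X, 𝟙 X, S.conf_id_right Z X hZ⟩
  let θ : P ⟶ X ⊞ Y := hpo.desc biprod.inl biprod.inr (by simp)
  let θ' : X ⊞ Y ⟶ P := biprod.desc inlP inrP
  have hθθ' : θ ≫ θ' = 𝟙 P := by
    apply hpo.hom_ext
    · simp [θ, θ']
    · simp [θ, θ']
  have hθ'θ : θ' ≫ θ = 𝟙 (X ⊞ Y) := by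
    apply biprod.hom_ext' <;> simp [θ, θ']
  have h1 : S.conf (biprod.inr : Y ⟶ X ⊞ Y) (θ' ≫ g₂) :=
    S.conf_iso (Iso.refl Y) (Iso.mk θ θ' hθθ' hθ'θ) (Iso.refl W2) hg₂
      (by simp [θ]) (by simp [← Category.assoc, hθθ'])
  haveI hepi : Epi (biprod.fst : X ⊞ Y ⟶ X) := by
    haveI : Epi ((biprod.inl : X ⟶ X ⊞ Y) ≫ biprod.fst) := by
      rw [biprod.inl_fst]; infer_instance
    exact epi_of_epi biprod.inl biprod.fst
  refine S.conf_of_cokernel h1 (by simp) hepi ?_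
  intro T t ht
  refine ⟨biprod.inl ≫ t, ?_⟩
  apply biprod.hom_ext'
  · simp
  · simpa using ht.symm

lemma conf_inl_snd (X Y : E) :
    S.conf (biprod.inl : X ⟶ X ⊞ Y) (biprod.snd : X ⊞ Y ⟶ Y) := by
  obtain ⟨Z, hZ⟩ := HasZeroObject.zero (C := E)
  obtain ⟨P, inlP, inrP, hpo, W2, g₂, hg₂⟩ :=
    S.infl_pushout (0 : Z ⟶ Y) (0 : Z ⟶ X) ⟨Y, 𝟙 Y, S.conf_id_right Z Y hZ⟩
  let θ : P ⟶ X ⊞ Y := hpo.desc biprod.inr biprod.inl (by simp)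
  let θ' : X ⊞ Y ⟶ P := biprod.desc inrP inlP
  have hθθ' : θ ≫ θ' = 𝟙 P := by
    apply hpo.hom_ext
    · simp [θ, θ']
    · simp [θ, θ']
  have hθ'θ : θ' ≫ θ = 𝟙 (X ⊞ Y) := by
    apply biprod.hom_ext' <;> simp [θ, θ']
  have h1 : S.conf (biprod.inl : X ⟶ X ⊞ Y) (θ' ≫ g₂) :=
    S.conf_iso (Iso.refl X) (Iso.mk θ θ' hθθ' hθ'θ) (Iso.refl W2) hg₂
      (by simp [θ]) (by simp [← Category.assoc, hθθ'])
  haveI hepi : Epi (biprod.snd : X ⊞ Y ⟶ Y) := by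
    haveI : Epi ((biprod.inr : Y ⟶ X ⊞ Y) ≫ biprod.snd) := by
      rw [biprod.inr_snd]; infer_instance
    exact epi_of_epi biprod.inr biprod.snd
  refine S.conf_of_cokernel h1 (by simp) hepi ?_
  intro T t ht
  refine ⟨biprod.inr ≫ t, ?_⟩
  apply biprod.hom_ext'
  · simpa using ht.symm
  · simp

/-- A retraction of the inflation of a conflation splits it; in particular the
retraction is itself a deflation, with "kernel" the original quotient. -/
lemma split_retraction {M N So : E} {i : M ⟶ N} {q : N ⟶ So} (h : S.conf i q)
    {r : N ⟶ M} (hr : i ≫ r = 𝟙 M) :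
    ∃ s : So ⟶ N, s ≫ q = 𝟙 So ∧ s ≫ r = 0 ∧ r ≫ i + q ≫ s = 𝟙 N ∧ S.conf s r := by
  haveI hq : Epi q := S.epi_of_conf h
  obtain ⟨s, hs⟩ := S.coker_fac h (𝟙 N - r ≫ i)
    (by rw [Preadditive.comp_sub, Category.comp_id, ← Category.assoc, hr,
      Category.id_comp, sub_self])
  have hsum : r ≫ i + q ≫ s = 𝟙 N := by rw [hs]; abel
  have hsq : s ≫ q = 𝟙 So := by
    rw [← cancel_epi q, ← Category.assoc, hs, Preadditive.sub_comp, Category.id_comp,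
      Category.assoc, S.conf_comp h, comp_zero, sub_zero, Category.comp_id]
  have hsr : s ≫ r = 0 := by
    rw [← cancel_epi q, ← Category.assoc, hs, Preadditive.sub_comp, Category.id_comp,
      Category.assoc, hr, Category.comp_id, sub_self, comp_zero]
  refine ⟨s, hsq, hsr, hsum, ?_⟩
  let θ : N ⟶ M ⊞ So := biprod.lift r q
  let θ' : M ⊞ So ⟶ N := biprod.desc i s
  have h1 : θ ≫ θ' = 𝟙 N := by
    simp only [θ, θ', biprod.lift_desc]; exact hsum
  have h2 : θ' ≫ θ = 𝟙 (M ⊞ So) := by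
    apply biprod.hom_ext' <;> apply biprod.hom_ext <;>
      simp [θ, θ', hr, hsq, hsr, S.conf_comp h]
  refine S.conf_iso (Iso.refl So) (Iso.mk θ' θ h2 h1) (Iso.refl M)
    (S.conf_inr_fst M So) (by simp [θ']) ?_
  apply biprod.hom_ext' <;> simp [θ', hr, hsr]

/-- A section of the deflation of a conflation gives a retraction of the
inflation. -/
lemma split_section {M N So : E} {i : M ⟶ N} {q : N ⟶ So} (h : S.conf i q)
    {s : So ⟶ N} (hs : s ≫ q = 𝟙 So) :
    ∃ χ : N ⟶ M, i ≫ χ = 𝟙 M ∧ s ≫ χ = 0 ∧ χ ≫ i + q ≫ s = 𝟙 N := by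
  haveI := S.mono_of_conf h
  obtain ⟨χ, hχ⟩ := S.ker_fac h (𝟙 N - q ≫ s)
    (by rw [Preadditive.sub_comp, Category.id_comp, Category.assoc, hs,
      Category.comp_id, sub_self])
  refine ⟨χ, ?_, ?_, by rw [hχ]; abel⟩
  · rw [← cancel_mono i, Category.assoc, hχ, Preadditive.comp_sub, Category.comp_id,
      ← Category.assoc, S.conf_comp h, zero_comp, sub_zero, Category.id_comp]
  · rw [← cancel_mono i, Category.assoc, hχ, Preadditive.comp_sub, Category.comp_id,
      ← Category.assoc, hs, Category.id_comp, sub_self, zero_comp]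
/-- Noether lemma (pushout form): pushing out a conflation
`K ↣ X1 ↠ M1` along an inflation `X1 ↣ X` (with quotient `So`). -/
lemma noetherB {K X1 M1 X So : E} {k : K ⟶ X1} {π1 : X1 ⟶ M1} {i : X1 ⟶ X}
    {p : X ⟶ So} (h1 : S.conf k π1) (h2 : S.conf i p) :
    ∃ (N : E) (π' : X ⟶ N) (i' : M1 ⟶ N) (q : N ⟶ So),
      S.conf (k ≫ i) π' ∧ S.conf i' q ∧ i ≫ π' = π1 ≫ i' ∧ π' ≫ q = p ∧
      ∀ (T : E) (a : X ⟶ T) (b : M1 ⟶ T), i ≫ a = π1 ≫ b →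
        ∃ u : N ⟶ T, π' ≫ u = a ∧ i' ≫ u = b := by
  obtain ⟨N, π', hπ'⟩ := S.infl_comp ⟨M1, π1, h1⟩ ⟨So, p, h2⟩
  haveI hπ'epi : Epi π' := S.epi_of_conf hπ'
  haveI hπ1epi : Epi π1 := S.epi_of_conf h1
  obtain ⟨i', hi'⟩ := S.coker_fac h1 (i ≫ π')
    (by rw [← Category.assoc]; exact S.conf_comp hπ')
  obtain ⟨q, hq⟩ := S.coker_fac hπ' p
    (by rw [Category.assoc, S.conf_comp h2, comp_zero])
  have univ : ∀ (T : E) (a : X ⟶ T) (b : M1 ⟶ T), i ≫ a = π1 ≫ b →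
      ∃ u : N ⟶ T, π' ≫ u = a ∧ i' ≫ u = b := by
    intro T a b hab
    obtain ⟨u, hu⟩ := S.coker_fac hπ' a
      (by rw [Category.assoc, hab, ← Category.assoc, S.conf_comp h1, zero_comp])
    refine ⟨u, hu, ?_⟩
    rw [← cancel_epi π1, ← Category.assoc, hi', Category.assoc, hu, hab]
  -- `i'` is an inflation: compare with the pushout from the axioms
  obtain ⟨P, inlP, inrP, hpo, W2, g₂, hg₂⟩ := S.infl_pushout i π1 ⟨So, p, h2⟩
  let θ : P ⟶ N := hpo.desc π' i' hi'.symm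
  obtain ⟨θ', hθ'1, hθ'2⟩ := univ P inlP inrP hpo.w
  have hθθ : θ' ≫ θ = 𝟙 N := by
    rw [← cancel_epi π', ← Category.assoc, hθ'1, Category.comp_id]
    simp [θ]
  have hθθ' : θ ≫ θ' = 𝟙 P := by
    apply hpo.hom_ext
    · rw [← Category.assoc, Category.comp_id]
      simp [θ, hθ'1]
    · rw [← Category.assoc, Category.comp_id]
      simp [θ, hθ'2]
  have hi'infl : S.conf i' (θ' ≫ g₂) :=
    S.conf_iso (Iso.refl M1) (Iso.mk θ θ' hθθ' hθθ) (Iso.refl W2) hg₂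
      (by simp [θ]) (by simp [← Category.assoc, hθθ'])
  have hi'q0 : i' ≫ q = 0 := by
    rw [← cancel_epi π1, ← Category.assoc, hi', Category.assoc, hq,
      S.conf_comp h2, comp_zero]
  have hqepi : Epi q := by
    haveI : Epi (π' ≫ q) := by rw [hq]; exact S.epi_of_conf h2
    exact epi_of_epi π' q
  have hconfi'q : S.conf i' q := by
    refine S.conf_of_cokernel hi'infl hi'q0 hqepi ?_
    intro T t ht
    obtain ⟨v, hv⟩ := S.coker_fac h2 (π' ≫ t)
      (by rw [← Category.assoc, ← hi', Category.assoc, ht, comp_zero])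
    refine ⟨v, ?_⟩
    rw [← cancel_epi π', ← Category.assoc, hq, hv]
  exact ⟨N, π', i', q, hπ', hconfi'q, hi'.symm, hq, univ⟩

/-- Noether lemma (pullback form): pulling back a conflation `A ↣ B ↠ C`
along an inflation `C' ↣ C` (with quotient `So`). -/
lemma noetherC {A B C C' So : E} {a : A ⟶ B} {b : B ⟶ C} {i : C' ⟶ C}
    {s : C ⟶ So} (h1 : S.conf a b) (h2 : S.conf i s) :
    ∃ (P : E) (p1 : P ⟶ B) (p2 : P ⟶ C') (a' : A ⟶ P),
      S.conf a' p2 ∧ S.conf p1 (b ≫ s) ∧ a' ≫ p1 = a ∧ a' ≫ p2 = 0 ∧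
      IsPullback p1 p2 b i := by
  obtain ⟨P, p1, p2, hPB, X0, f0, hf0⟩ := S.defl_pullback b i ⟨A, a, h1⟩
  haveI hmi : Mono i := S.mono_of_conf h2
  haveI hma : Mono a := S.mono_of_conf h1
  have ha0 : a ≫ b = 0 := S.conf_comp h1
  refine ⟨P, p1, p2, hPB.lift a 0 (by rw [ha0, zero_comp]), ?_, ?_,
    hPB.lift_fst .., hPB.lift_snd .., hPB⟩
  · have hm : Mono (hPB.lift a 0 (by rw [ha0, zero_comp])) := by
      have : Mono (hPB.lift a 0 (by rw [ha0, zero_comp]) ≫ p1) := by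
        rw [hPB.lift_fst]; infer_instance
      exact mono_of_mono _ p1
    refine S.conf_of_kernel hf0 (hPB.lift_snd ..) hm ?_
    intro T t ht
    have htb : (t ≫ p1) ≫ b = 0 := by
      rw [Category.assoc, hPB.w, ← Category.assoc, ht, zero_comp]
    obtain ⟨h', hh'⟩ := S.ker_fac h1 (t ≫ p1) htb
    refine ⟨h', hPB.hom_ext ?_ ?_⟩
    · rw [Category.assoc, hPB.lift_fst, hh']
    · rw [Category.assoc, hPB.lift_snd, comp_zero, ht]
  · obtain ⟨X1m, f1, hf1⟩ := S.defl_comp ⟨A, a, h1⟩ ⟨C', i, h2⟩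
    have hm : Mono p1 := by
      refine ⟨fun {T} x y hxy => hPB.hom_ext hxy ?_⟩
      rw [← cancel_mono i, Category.assoc, Category.assoc, ← hPB.w,
        ← Category.assoc, hxy, Category.assoc]
    refine S.conf_of_kernel hf1 ?_ hm ?_
    · rw [← Category.assoc, hPB.w, Category.assoc, S.conf_comp h2, comp_zero]
    · intro T t ht
      obtain ⟨h', hh'⟩ := S.ker_fac h2 (t ≫ b) (by rw [Category.assoc]; exact ht)
      exact ⟨hPB.lift t h' hh'.symm, hPB.lift_fst ..⟩
/-- Short five lemma: a morphism of conflations which is the identity on the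
outer terms is an isomorphism in the middle. -/
lemma short_five {M N N' So : E} {i : M ⟶ N} {q : N ⟶ So} {i' : M ⟶ N'}
    {q' : N' ⟶ So} (h1 : S.conf i q) (h2 : S.conf i' q') (m : N ⟶ N')
    (e1 : i ≫ m = i') (e2 : m ≫ q' = q) :
    ∃ ψ : N' ⟶ N, m ≫ ψ = 𝟙 N ∧ ψ ≫ m = 𝟙 N' := by
  haveI hmi : Mono i := S.mono_of_conf h1
  haveI hmi' : Mono i' := S.mono_of_conf h2
  obtain ⟨D, q1, q2, hPB, X0, f0, hf0⟩ := S.defl_pullback q' q ⟨M, i', h2⟩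
  let σ : N ⟶ D := hPB.lift m (𝟙 N) (by rw [e2, Category.id_comp])
  have hσ1 : σ ≫ q1 = m := hPB.lift_fst ..
  have hσ2 : σ ≫ q2 = 𝟙 N := hPB.lift_snd ..
  let a'' : M ⟶ D := hPB.lift i' 0 (by rw [S.conf_comp h2, zero_comp])
  have ha1 : a'' ≫ q1 = i' := hPB.lift_fst ..
  have ha2 : a'' ≫ q2 = 0 := hPB.lift_snd ..
  have hca : S.conf a'' q2 := by
    have hm : Mono a'' := by
      have : Mono (a'' ≫ q1) := by rw [ha1]; infer_instance
      exact mono_of_mono _ q1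
    refine S.conf_of_kernel hf0 ha2 hm ?_
    intro T t ht
    have : (t ≫ q1) ≫ q' = 0 := by
      rw [Category.assoc, hPB.w, ← Category.assoc, ht, zero_comp]
    obtain ⟨h', hh'⟩ := S.ker_fac h2 (t ≫ q1) this
    refine ⟨h', hPB.hom_ext ?_ ?_⟩
    · rw [Category.assoc, ha1, hh']
    · rw [Category.assoc, ha2, comp_zero, ht]
  obtain ⟨χ, hχ1, hχ2, hχ3⟩ := S.split_section hca hσ2
  -- `q1` is a deflation (pullback in the other order)
  obtain ⟨D₂, r1, r2, hPB₂, X2, f2, hf2⟩ := S.defl_pullback q q' ⟨M, i, h1⟩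
  let e : D ⟶ D₂ := hPB₂.lift q2 q1 hPB.w.symm
  let e' : D₂ ⟶ D := hPB.lift r2 r1 hPB₂.w.symm
  have hee' : e ≫ e' = 𝟙 D := by
    apply hPB.hom_ext <;> rw [Category.assoc, Category.id_comp] <;> simp [e, e']
  have he'e : e' ≫ e = 𝟙 D₂ := by
    apply hPB₂.hom_ext <;> rw [Category.assoc, Category.id_comp] <;> simp [e, e']
  have hq1defl : S.conf (f2 ≫ e') q1 :=
    S.conf_iso (Iso.refl X2) (Iso.mk e' e he'e hee') (Iso.refl N') hf2
      (by simp) (by simp [e'])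
  let b'' : M ⟶ D := hPB.lift 0 i (by rw [zero_comp, S.conf_comp h1])
  have hb1 : b'' ≫ q1 = 0 := hPB.lift_fst ..
  have hb2 : b'' ≫ q2 = i := hPB.lift_snd ..
  have hcb : S.conf b'' q1 := by
    have hm : Mono b'' := by
      have : Mono (b'' ≫ q2) := by rw [hb2]; infer_instance
      exact mono_of_mono _ q2
    refine S.conf_of_kernel hq1defl hb1 hm ?_
    intro T t ht
    have : (t ≫ q2) ≫ q = 0 := by
      rw [Category.assoc, ← hPB.w, ← Category.assoc, ht, zero_comp]
    obtain ⟨h', hh'⟩ := S.ker_fac h1 (t ≫ q2) this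
    refine ⟨h', hPB.hom_ext ?_ ?_⟩
    · rw [Category.assoc, hb1, comp_zero, ht]
    · rw [Category.assoc, hb2, hh']
  -- the key sign computation
  have hχa : χ ≫ a'' = 𝟙 D - q2 ≫ σ := by rw [← hχ3]; abel
  have hA : χ ≫ i' = q1 - q2 ≫ m := by
    have h6 := congrArg (· ≫ q1) hχa
    simp only [Category.assoc, Preadditive.sub_comp, Category.id_comp] at h6
    rw [ha1, hσ1] at h6
    exact h6
  have hkey : b'' ≫ χ = -(𝟙 M) := by
    rw [← cancel_mono i', Category.assoc, hA, Preadditive.comp_sub, hb1,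
      ← Category.assoc, hb2, e1, zero_sub, Preadditive.neg_comp, Category.id_comp]
  have hretr : b'' ≫ (-χ) = 𝟙 M := by
    rw [Preadditive.comp_neg, hkey, neg_neg]
  obtain ⟨s₁, hs₁q, hs₁r, hsum, _⟩ := S.split_retraction hcb hretr
  have hs₁χ : s₁ ≫ χ = 0 := by
    rw [Preadditive.comp_neg, neg_eq_zero] at hs₁r; exact hs₁r
  simp only [Preadditive.neg_comp] at hsum
  have hq1s₁ : q1 ≫ s₁ = 𝟙 D + χ ≫ b'' := by rw [← hsum]; abel
  have hq2σ : q2 ≫ σ = 𝟙 D - χ ≫ a'' := by rw [← hχ3]; abel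
  refine ⟨s₁ ≫ q2, ?_, ?_⟩
  · calc m ≫ s₁ ≫ q2 = σ ≫ (q1 ≫ s₁) ≫ q2 := by
          rw [← hσ1]; simp only [Category.assoc]
      _ = σ ≫ (𝟙 D + χ ≫ b'') ≫ q2 := by rw [hq1s₁]
      _ = σ ≫ q2 + σ ≫ χ ≫ b'' ≫ q2 := by
          simp [Preadditive.add_comp, Preadditive.comp_add, Category.assoc]
      _ = 𝟙 N := by rw [hσ2, ← Category.assoc, hχ2, zero_comp, add_zero]
  · calc (s₁ ≫ q2) ≫ m = s₁ ≫ (q2 ≫ σ) ≫ q1 := by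
          rw [← hσ1]; simp only [Category.assoc]
      _ = s₁ ≫ (𝟙 D - χ ≫ a'') ≫ q1 := by rw [hq2σ]
      _ = s₁ ≫ q1 - s₁ ≫ χ ≫ a'' ≫ q1 := by
          simp [Preadditive.sub_comp, Preadditive.comp_sub, Category.assoc]
      _ = 𝟙 N' := by rw [hs₁q, ← Category.assoc, hs₁χ, zero_comp, sub_zero]
/-- In a semibrick, any nonzero morphism between members is an isomorphism. -/
lemma semibrick_isIso {𝒮 : Set E} (h𝒮 : Semibrick 𝒮) {S1 S2 : E} (h1 : S1 ∈ 𝒮)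
    (h2 : S2 ∈ 𝒮) {f : S1 ⟶ S2} (hf : f ≠ 0) : IsIso f := by
  by_cases he : Nonempty (S1 ≅ S2)
  · obtain ⟨e⟩ := he
    have hne : f ≫ e.inv ≠ 0 := fun h0 => hf (by
      rw [← Category.comp_id f, ← e.inv_hom_id, ← Category.assoc, h0, zero_comp])
    haveI := (h𝒮.1 S1 h1).2 _ hne
    have hfe : f = (f ≫ e.inv) ≫ e.hom := by simp
    rw [hfe]; infer_instance
  · exact absurd (h𝒮.2 S1 h1 S2 h2 (not_nonempty_iff.mp he) f) hf

/-- A nonzero morphism from a filtered object to a brick of the semibrick is a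
deflation with filtered kernel. -/
lemma homToBrick {𝒮 : Set E} (h𝒮 : Semibrick 𝒮) {n : ℕ} {X : E}
    (hX : FiltLenP S.conf 𝒮 n X) :
    ∀ (Sb : E), Sb ∈ 𝒮 → ∀ (f : X ⟶ Sb), f ≠ 0 →
      ∃ (K : E) (k : K ⟶ X), K ∈ S.Filt 𝒮 ∧ S.conf k f := by
  induction hX with
  | zero X h0 => exact fun Sb _ f hf => absurd (h0.eq_of_src f 0) hf
  | @step X1 X Sk n i p hX1 hSk hip ih =>
    intro Sb hSb f hf
    by_cases h0 : i ≫ f = 0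
    · obtain ⟨g, hg⟩ := S.coker_fac hip f h0
      have hgne : g ≠ 0 := fun hg0 => hf (by rw [← hg, hg0, comp_zero])
      haveI := semibrick_isIso h𝒮 hSk hSb hgne
      have hc : S.conf i (p ≫ g) := S.conf_iso_right hip (asIso g)
      rw [hg] at hc
      exact ⟨_, i, ⟨n, hX1⟩, hc⟩
    · obtain ⟨K1, k1, hK1, hk1⟩ := ih _ hSb _ h0
      obtain ⟨N, π', i', q, hNπ, hNi', hcomm, hq, univ⟩ := S.noetherB hk1 hip
      obtain ⟨r, hrπ, hri⟩ := univ _ f (𝟙 Sb) (Category.comp_id _).symm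
      obtain ⟨s, _, _, _, hconf_s⟩ := S.split_retraction hNi' hri
      obtain ⟨P, p1, p2, a', hca', hcp1, _, _, _⟩ := S.noetherC hNπ hconf_s
      rw [hrπ] at hcp1
      obtain ⟨mK, hmK⟩ := hK1
      exact ⟨P, p1, ⟨mK + 1, FiltLenP.step mK a' p2 hmK hSk hca'⟩, hcp1⟩

/-- A nonzero morphism from a brick of the semibrick to a filtered object is an
inflation with filtered cokernel. -/
lemma homFromBrick {𝒮 : Set E} (h𝒮 : Semibrick 𝒮) {m : ℕ} {Y : E}
    (hY : FiltLenP S.conf 𝒮 m Y) :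
    ∀ (Sb : E), Sb ∈ 𝒮 → ∀ (g : Sb ⟶ Y), g ≠ 0 →
      ∃ (C : E) (c : Y ⟶ C), C ∈ S.Filt 𝒮 ∧ S.conf g c := by
  induction hY with
  | zero Y h0 => exact fun Sb _ g hg => absurd (h0.eq_of_tgt g 0) hg
  | @step Y1 Y Sk m j d hY1 hSk hjd ih =>
    intro Sb hSb g hg
    by_cases h0 : g ≫ d = 0
    · obtain ⟨g', hg'⟩ := S.ker_fac hjd g h0
      have hg'ne : g' ≠ 0 := fun h => hg (by rw [← hg', h, zero_comp])
      obtain ⟨C', c', hC', hc'⟩ := ih _ hSb _ hg'ne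
      obtain ⟨N, π', i', q, hNπ, hNi', _, _, _⟩ := S.noetherB hc' hjd
      rw [hg'] at hNπ
      obtain ⟨mC, hmC⟩ := hC'
      exact ⟨N, π', ⟨mC + 1, FiltLenP.step mC i' q hmC hSk hNi'⟩, hNπ⟩
    · haveI := semibrick_isIso h𝒮 hSb hSk h0
      haveI hmj : Mono j := S.mono_of_conf hjd
      have hinv : (d ≫ inv (g ≫ d)) ≫ (g ≫ d) = d := by
        rw [Category.assoc, IsIso.inv_hom_id, Category.comp_id]
      have hζ : (𝟙 Y - (d ≫ inv (g ≫ d)) ≫ g) ≫ d = 0 := by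
        rw [Preadditive.sub_comp, Category.id_comp, Category.assoc, hinv, sub_self]
      obtain ⟨ξ, hξ⟩ := S.ker_fac hjd _ hζ
      have hge : g ≫ d ≫ inv (g ≫ d) = 𝟙 Sb := by
        rw [← Category.assoc, IsIso.hom_inv_id]
      have hgξ : g ≫ ξ = 0 := by
        rw [← cancel_mono j, Category.assoc, hξ, Preadditive.comp_sub,
          Category.comp_id, ← Category.assoc, ← Category.assoc,
          IsIso.hom_inv_id, Category.id_comp, sub_self, zero_comp]
      have hjξ : j ≫ ξ = 𝟙 _ := by
        rw [← cancel_mono j, Category.assoc, hξ, Preadditive.comp_sub,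
          Category.comp_id, ← Category.assoc, ← Category.assoc, S.conf_comp hjd,
          zero_comp, zero_comp, sub_zero, Category.id_comp]
      let θ : Y ⟶ Sb ⊞ _ := biprod.lift (d ≫ inv (g ≫ d)) ξ
      let θ' : Sb ⊞ _ ⟶ Y := biprod.desc g j
      have hθθ' : θ ≫ θ' = 𝟙 Y := by
        simp only [θ, θ', biprod.lift_desc]
        rw [hξ, Category.assoc]; abel
      have hjdi : j ≫ d ≫ inv (g ≫ d) = 0 := by
        rw [← Category.assoc, S.conf_comp hjd, zero_comp]
      have hθ'θ : θ' ≫ θ = 𝟙 _ := by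
        apply biprod.hom_ext' <;> apply biprod.hom_ext <;>
          simp [θ, θ', hgξ, hjξ, hge, hjdi]
      have hcξ : S.conf g ξ := by
        refine S.conf_iso (Iso.refl Sb) (Iso.mk θ' θ hθ'θ hθθ') (Iso.refl _)
          (S.conf_inl_snd Sb _) (by simp [θ']) ?_
        apply biprod.hom_ext' <;> simp [θ', hgξ, hjξ]
      exact ⟨_, ξ, ⟨m, hY1⟩, hcξ⟩
/-- Main auxiliary statement: any morphism from a filtered object to a filtered
object factors as a deflation followed by an inflation, with middle object,
kernel and cokernel all filtered. -/
lemma mainAux {𝒮 : Set E} (h𝒮 : Semibrick 𝒮) {n : ℕ} {X : E}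
    (hX : FiltLenP S.conf 𝒮 n X) :
    ∀ (Y : E), Y ∈ S.Filt 𝒮 → ∀ (φ : X ⟶ Y),
      ∃ (M : E) (π : X ⟶ M) (ι : M ⟶ Y) (K : E) (k : K ⟶ X) (C : E) (c : Y ⟶ C),
        M ∈ S.Filt 𝒮 ∧ K ∈ S.Filt 𝒮 ∧ C ∈ S.Filt 𝒮 ∧
        S.conf k π ∧ S.conf ι c ∧ π ≫ ι = φ := by
  induction hX with
  | zero X h0 =>
    intro Y hY φ
    refine ⟨X, 𝟙 X, φ, X, 0, Y, 𝟙 Y, ⟨0, .zero X h0⟩, ⟨0, .zero X h0⟩, hY,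
      S.conf_id_right X X h0, ?_, Category.id_comp φ⟩
    have hφ0 : φ = 0 := h0.eq_of_src φ 0
    rw [hφ0]
    exact S.conf_id_right X Y h0
  | @step X1 X Sk n i p hX1 hSk hip ih =>
    intro Y hY φ
    obtain ⟨M1, π1, ι1, K1, k1, C1, c1, hM1, hK1, hC1, hk1, hι1, hfac⟩ :=
      ih Y hY (i ≫ φ)
    have hkill : i ≫ (φ ≫ c1) = 0 := by
      rw [← Category.assoc, ← hfac, Category.assoc, S.conf_comp hι1, comp_zero]
    obtain ⟨g, hgdef⟩ := S.coker_fac hip (φ ≫ c1) hkill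
    obtain ⟨N, π', i', q, hNπ, hNi', hcomm, hq, univ⟩ := S.noetherB hk1 hip
    haveI hπ'epi : Epi π' := S.epi_of_conf hNπ
    by_cases hg : g = 0
    · -- the morphism already lands in `M1`
      have hφc : φ ≫ c1 = 0 := by rw [← hgdef, hg, comp_zero]
      obtain ⟨u, huπ, hui⟩ := univ Y φ ι1 hfac.symm
      have huc : u ≫ c1 = 0 := by
        rw [← cancel_epi π', ← Category.assoc, huπ, hφc, comp_zero]
      obtain ⟨v, hv⟩ := S.ker_fac hι1 u huc
      have hret : i' ≫ v = 𝟙 M1 := by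
        haveI := S.mono_of_conf hι1
        rw [← cancel_mono ι1, Category.assoc, hv, hui, Category.id_comp]
      obtain ⟨s, _, _, _, hconf_s⟩ := S.split_retraction hNi' hret
      obtain ⟨P, p1, p2, a', hca', hcp1, _, _, _⟩ := S.noetherC hNπ hconf_s
      obtain ⟨mK, hmK⟩ := hK1
      refine ⟨M1, π' ≫ v, ι1, P, p1, C1, c1, hM1,
        ⟨mK + 1, .step mK a' p2 hmK hSk hca'⟩, hC1, hcp1, hι1, ?_⟩
      rw [Category.assoc, hv, huπ]
    · -- the quotient brick maps nontrivially to `C1`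
      obtain ⟨mC1, hmC1⟩ := hC1
      obtain ⟨C2, c2, hC2, hgc⟩ := S.homFromBrick h𝒮 hmC1 _ hSk g hg
      obtain ⟨P, pt1, pt2, at', hcat, hcpt1, hat1, hat2, hPB⟩ := S.noetherC hι1 hgc
      let w : X ⟶ P := hPB.lift φ p hgdef.symm
      have hw1 : w ≫ pt1 = φ := hPB.lift_fst ..
      have hw2 : w ≫ pt2 = p := hPB.lift_snd ..
      have hiw : i ≫ w = π1 ≫ at' := by
        apply hPB.hom_ext
        · rw [Category.assoc, hw1, Category.assoc, hat1, hfac]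
        · rw [Category.assoc, hw2, Category.assoc, hat2, comp_zero,
            S.conf_comp hip]
      obtain ⟨u', hu'1, hu'2⟩ := univ P w at' hiw
      have hu'q : u' ≫ pt2 = q := by
        rw [← cancel_epi π', ← Category.assoc, hu'1, hw2, hq]
      obtain ⟨ψ, hψ1, hψ2⟩ := S.short_five hNi' hcat u' hu'2 hu'q
      have hcw : S.conf (k1 ≫ i) (π' ≫ u') :=
        S.conf_iso_right hNπ ⟨u', ψ, hψ1, hψ2⟩
      rw [hu'1] at hcw
      obtain ⟨mM1, hmM1⟩ := hM1
      exact ⟨P, w, pt1, K1, k1 ≫ i, C2, c1 ≫ c2,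
        ⟨mM1 + 1, .step mM1 at' pt2 hmM1 hSk hcat⟩, hK1, hC2, hcw, hcpt1, hw1⟩

end ExactStruct

end Aux
/-- If `𝒮` is a semibrick, every morphism `φ : X ⟶ Y` with
`X, Y ∈ Filt 𝒮` factors as a deflation followed by an inflation through an
object of `Filt 𝒮`. -/
theorem admissible_factorization_in_filt {E : Type u} [Category.{v} E] [Preadditive E]
    [HasZeroObject E] [HasBinaryBiproducts E] (S : ExactStruct E)
    {𝒮 : Set E} (h𝒮 : Semibrick 𝒮) {X Y : E} (hX : X ∈ S.Filt 𝒮)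
    (hY : Y ∈ S.Filt 𝒮) (φ : X ⟶ Y) :
    ∃ (M : E) (π : X ⟶ M) (ι : M ⟶ Y),
      M ∈ S.Filt 𝒮 ∧ S.Deflation π ∧ S.Inflation ι ∧ π ≫ ι = φ := by
  obtain ⟨n, hXn⟩ := hX
  obtain ⟨M, π, ι, K, k, C, c, hM, _, _, hkπ, hιc, hfac⟩ :=
    S.mainAux h𝒮 hXn Y hY φ
  exact ⟨M, π, ι, hM, ⟨K, k, hkπ⟩, ⟨C, c, hιc⟩, hfac⟩
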